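/- arXiv:2602.21390 — 5 statements merged into one kernel-verified Lean document; each statement's English description precedes it below -/
import Mathlib

section
/- Under the defensive forecasting setup with EVI condition at tolerances ε_1,…,ε_T, the accumulated Hilbert-space error vector satisfies ‖M_T‖_H ≤ sqrt( Σ_{t=1}^T ‖E_{p∼D_t}[Φ(x_t,p)(z_t − p)]‖_H² + 2 Σ_{t=1}^T ε_t ). -/
open scoped BigOperators RealInnerProductSpace

/-- A finitely supported probability distribution, given by finitely many
weighted atoms. -/
structure FinDist (α : Type*) where
  n : ℕ
  w : Fin n → ℝ
  pt : Fin n → α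
  w_nonneg : ∀ i, 0 ≤ w i
  w_sum : ∑ i, w i = 1

namespace FinDist

/-- Expectation of a vector-valued function under a finitely supported
probability distribution. -/
noncomputable def exp {α V : Type*} [AddCommMonoid V] [Module ℝ V]
    (D : FinDist α) (f : α → V) : V :=
  ∑ i, D.w i • f (D.pt i)

/-- The support of a finitely supported probability distribution. -/
def support {α : Type*} (D : FinDist α) : Set α :=
  {a | ∃ i, D.w i ≠ 0 ∧ D.pt i = a}

end FinDist

/-- under the EVI condition with tolerances `ε t`, the accumulated
Hilbert-space error vector `M_T = ∑_t E_{p ∼ D_t}[Φ(x_t,p)(z_t − p)]` satisfies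
`‖M_T‖ ≤ sqrt(∑_t ‖E_{p∼D_t}[Φ(x_t,p)(z_t−p)]‖² + 2 ∑_t ε_t)`. -/
theorem stmt_0
    {H : Type*} [NormedAddCommGroup H] [InnerProductSpace ℝ H] [CompleteSpace H]
    {X : Type*} [Nonempty X] {d : ℕ} (hd : 1 ≤ d)
    (Z : Set (EuclideanSpace ℝ (Fin d))) (hZ : Z.Nonempty)
    (Φ : X → EuclideanSpace ℝ (Fin d) → (EuclideanSpace ℝ (Fin d) →L[ℝ] H))
    (T : ℕ) (hT : 1 ≤ T)
    (x : ℕ → X) (z : ℕ → EuclideanSpace ℝ (Fin d)) (hz : ∀ t < T, z t ∈ Z)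
    (D : ℕ → FinDist (EuclideanSpace ℝ (Fin d)))
    (hD : ∀ t < T, (D t).support ⊆ Z)
    (ε : ℕ → ℝ) (hε : ∀ t < T, 0 ≤ ε t)
    (hEVI : ∀ t < T, ∀ z' ∈ Z,
      (D t).exp (fun p =>
        (⟪(∑ τ ∈ Finset.range t, (D τ).exp (fun q => Φ (x τ) q (z τ - q))),
          Φ (x t) p (z' - p)⟫)) ≤ ε t) :
    ‖∑ t ∈ Finset.range T, (D t).exp (fun p => Φ (x t) p (z t - p))‖ ≤
      Real.sqrt (∑ t ∈ Finset.range T,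
          ‖(D t).exp (fun p => Φ (x t) p (z t - p))‖ ^ 2
        + 2 * ∑ t ∈ Finset.range T, ε t) := by

  classical
  set w : ℕ → H := fun t => (D t).exp (fun p => Φ (x t) p (z t - p)) with hw
  have key : ∀ t < T, ⟪∑ τ ∈ Finset.range t, w τ, w t⟫ ≤ ε t := by
    intro t ht
    have h := hEVI t ht (z t) (hz t ht)
    calc ⟪∑ τ ∈ Finset.range t, w τ, w t⟫
        = (D t).exp (fun p =>
            (⟪(∑ τ ∈ Finset.range t, (D τ).exp (fun q => Φ (x τ) q (z τ - q))),
              Φ (x t) p (z t - p)⟫)) := by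
          simp only [FinDist.exp, hw, inner_sum, real_inner_smul_right, smul_eq_mul]
      _ ≤ ε t := h
  have main : ∀ n ≤ T, ‖∑ t ∈ Finset.range n, w t‖ ^ 2 ≤
      ∑ t ∈ Finset.range n, ‖w t‖ ^ 2 + 2 * ∑ t ∈ Finset.range n, ε t := by
    intro n hn
    induction n with
    | zero => simp
    | succ m ih =>
      have hm : m < T := hn
      have ihm := ih (le_of_lt hm)
      rw [Finset.sum_range_succ, Finset.sum_range_succ, Finset.sum_range_succ]
      have expand : ‖(∑ t ∈ Finset.range m, w t) + w m‖ ^ 2 =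
          ‖∑ t ∈ Finset.range m, w t‖ ^ 2 + 2 * ⟪∑ τ ∈ Finset.range m, w τ, w m⟫ + ‖w m‖ ^ 2 := by
        rw [@norm_add_sq_real]
      rw [expand]
      have hk := key m hm
      nlinarith
  have hsq := main T le_rfl
  have hnn : (0:ℝ) ≤ ∑ t ∈ Finset.range T, ‖w t‖ ^ 2 + 2 * ∑ t ∈ Finset.range T, ε t := by
    have : (0:ℝ) ≤ ‖∑ t ∈ Finset.range T, w t‖ ^ 2 := sq_nonneg _
    linarith
  calc ‖∑ t ∈ Finset.range T, w t‖
      = Real.sqrt (‖∑ t ∈ Finset.range T, w t‖ ^ 2) := by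
        rw [Real.sqrt_sq (norm_nonneg _)]
    _ ≤ Real.sqrt (∑ t ∈ Finset.range T, ‖w t‖ ^ 2 + 2 * ∑ t ∈ Finset.range T, ε t) :=
        Real.sqrt_le_sqrt hsq
end

section
/- (Theorem 4.1, guarantee of Defensive Generation.) Let Y be a nonempty set and s : Y → Z with Z ⊆ ℝ^d satisfying ‖z − z′‖_2 ≤ D for all z, z′ ∈ Z, and suppose ‖Φ(x,p)‖_op² ≤ G for all x ∈ X, p ∈ Z. Suppose the EVI condition holds with tolerances ε_t ≤ D²G/2 for all t, where the targets are z_t := s(y_t) for realized outcomes y_1,…,y_T ∈ Y. Suppose that for each t and each p in the support of D_t, μ_{t,p} is a finitely supported probability measure on Y with E_{ỹ∼μ_{t,p}}[s(ỹ)] = p. Then for every h ∈ H, the distinguisher f(x,p,y) := ⟨h, Φ(x,p)(s(y))⟩_H satisfies OIGap_T(f) ≤ ‖h‖_H · sqrt( 2·D²·G·T ). -/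
open scoped BigOperators RealInnerProductSpace

section Aux

variable {H : Type*} [NormedAddCommGroup H] [InnerProductSpace ℝ H]

lemma FinDist.inner_exp {α : Type*} (D : FinDist α) (v : H) (f : α → H) :
    ⟪v, D.exp f⟫ = D.exp (fun a => ⟪v, f a⟫) := by
  simp [FinDist.exp, inner_sum, real_inner_smul_right, smul_eq_mul]

lemma FinDist.exp_congr {α V : Type*} [AddCommMonoid V] [Module ℝ V]
    (D : FinDist α) {f g : α → V} (hfg : ∀ a ∈ D.support, f a = g a) :
    D.exp f = D.exp g := by
  unfold FinDist.exp
  refine Finset.sum_congr rfl fun i _ => ?_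
  rcases eq_or_ne (D.w i) 0 with h0 | h0
  · simp [h0]
  · rw [hfg _ ⟨i, h0, rfl⟩]

lemma FinDist.exp_sub {α V : Type*} [AddCommGroup V] [Module ℝ V]
    (D : FinDist α) (f g : α → V) :
    D.exp f - D.exp g = D.exp (fun a => f a - g a) := by
  simp [FinDist.exp, smul_sub, Finset.sum_sub_distrib]

lemma FinDist.map_exp {α : Type*} {E : Type*} [NormedAddCommGroup E]
    [NormedSpace ℝ E] (D : FinDist α) (L : E →L[ℝ] H) (f : α → E) :
    D.exp (fun a => L (f a)) = L (D.exp f) := by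
  simp [FinDist.exp, map_sum, map_smul]

lemma FinDist.exp_norm_le {α : Type*} (D : FinDist α) (f : α → H) (C : ℝ)
    (hC : ∀ a ∈ D.support, ‖f a‖ ≤ C) :
    ‖D.exp f‖ ≤ C := by
  calc ‖D.exp f‖ ≤ ∑ i, ‖D.w i • f (D.pt i)‖ := norm_sum_le _ _
    _ ≤ ∑ i : Fin D.n, D.w i * C := by
        refine Finset.sum_le_sum fun i _ => ?_
        rw [norm_smul, Real.norm_eq_abs, abs_of_nonneg (D.w_nonneg i)]
        rcases eq_or_ne (D.w i) 0 with h0 | h0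
        · simp [h0]
        · exact mul_le_mul_of_nonneg_left (hC _ ⟨i, h0, rfl⟩) (D.w_nonneg i)
    _ = C := by rw [← Finset.sum_mul, D.w_sum, one_mul]

end Aux

/-- Theorem 4.1: guarantee of the Defensive Generation algorithm.
Under the EVI condition with tolerances `ε_t ≤ D²G/2` and generating measures
matching the forecast statistics, every distinguisher
`f(x,p,y) = ⟪h, Φ(x,p)(s(y))⟫` has `OIGap_T(f) ≤ ‖h‖·sqrt(2 D² G T)`. -/
theorem stmt_3
    {H : Type*} [NormedAddCommGroup H] [InnerProductSpace ℝ H] [CompleteSpace H]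
    {X : Type*} [Nonempty X] {d : ℕ} (hd : 1 ≤ d)
    (Z : Set (EuclideanSpace ℝ (Fin d))) (hZ : Z.Nonempty)
    (Φ : X → EuclideanSpace ℝ (Fin d) → (EuclideanSpace ℝ (Fin d) →L[ℝ] H))
    {Y : Type*} [Nonempty Y] (s : Y → EuclideanSpace ℝ (Fin d))
    (hs : ∀ y', s y' ∈ Z)
    (Dm G : ℝ)
    (hDiam : ∀ z ∈ Z, ∀ z' ∈ Z, ‖z - z'‖ ≤ Dm)
    (hG : ∀ (x : X), ∀ p ∈ Z, ‖Φ x p‖ ^ 2 ≤ G)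
    (T : ℕ) (hT : 1 ≤ T)
    (x : ℕ → X) (y : ℕ → Y)
    (D : ℕ → FinDist (EuclideanSpace ℝ (Fin d)))
    (hD : ∀ t < T, (D t).support ⊆ Z)
    (ε : ℕ → ℝ) (hε : ∀ t < T, 0 ≤ ε t) (hεle : ∀ t < T, ε t ≤ Dm ^ 2 * G / 2)
    (hEVI : ∀ t < T, ∀ z' ∈ Z,
      (D t).exp (fun p =>
        (⟪(∑ τ ∈ Finset.range t, (D τ).exp (fun q => Φ (x τ) q (s (y τ) - q))),
          Φ (x t) p (z' - p)⟫)) ≤ ε t)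
    (μ : ℕ → EuclideanSpace ℝ (Fin d) → FinDist Y)
    (hμ : ∀ t < T, ∀ p ∈ (D t).support, (μ t p).exp (fun y' => s y') = p)
    (h : H) :
    |(∑ t ∈ Finset.range T, (D t).exp (fun p => (⟪h, Φ (x t) p (s (y t))⟫)))
      - (∑ t ∈ Finset.range T,
          (D t).exp (fun p => (μ t p).exp (fun y' => (⟪h, Φ (x t) p (s y')⟫))))| ≤
      ‖h‖ * Real.sqrt (2 * Dm ^ 2 * G * (T : ℝ)) := by
  -- basic nonnegativity
  obtain ⟨z0, hz0⟩ := hZ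
  obtain ⟨x0⟩ := (inferInstance : Nonempty X)
  have hG0 : 0 ≤ G := le_trans (sq_nonneg _) (hG x0 z0 hz0)
  have hDm0 : 0 ≤ Dm := by
    have := hDiam z0 hz0 z0 hz0
    simpa using this
  -- increments and martingale sums
  set W : ℕ → H := fun t => (D t).exp (fun q => Φ (x t) q (s (y t) - q)) with hW
  set M : ℕ → H := fun t => ∑ τ ∈ Finset.range t, W τ with hM
  -- bound on the operator norms
  have hΦle : ∀ (xx : X), ∀ p ∈ Z, ‖Φ xx p‖ ≤ Real.sqrt G := by
    intro xx p hp
    have := Real.sqrt_le_sqrt (hG xx p hp)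
    rwa [Real.sqrt_sq (norm_nonneg _)] at this
  -- norm bound on increments
  have hWnorm : ∀ t < T, ‖W t‖ ≤ Real.sqrt G * Dm := by
    intro t ht
    refine (D t).exp_norm_le _ _ fun p hp => ?_
    have hpZ : p ∈ Z := hD t ht hp
    calc ‖Φ (x t) p (s (y t) - p)‖ ≤ ‖Φ (x t) p‖ * ‖s (y t) - p‖ :=
          (Φ (x t) p).le_opNorm _
      _ ≤ Real.sqrt G * Dm := by
          exact mul_le_mul (hΦle _ _ hpZ) (hDiam _ (hs _) _ hpZ)
            (norm_nonneg _) (Real.sqrt_nonneg _)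
  -- EVI bound on ⟪M t, W t⟫
  have hMW : ∀ t < T, ⟪M t, W t⟫ ≤ ε t := by
    intro t ht
    have := hEVI t ht (s (y t)) (hs (y t))
    rw [hM, hW, FinDist.inner_exp]
    exact this
  -- the key potential bound by induction
  have hMsq : ∀ t ≤ T, ‖M t‖ ^ 2 ≤ 2 * Dm ^ 2 * G * (t : ℝ) := by
    intro t
    induction t with
    | zero => intro _; simp [hM]
    | succ t ih =>
        intro hst
        have ht : t < T := hst
        have ihle := ih (le_of_lt ht)
        have hstep : M (t + 1) = M t + W t := by
          rw [hM]; exact Finset.sum_range_succ _ _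
        have hWsq : ‖W t‖ ^ 2 ≤ Dm ^ 2 * G := by
          have h1 : ‖W t‖ ^ 2 ≤ (Real.sqrt G * Dm) ^ 2 :=
            pow_le_pow_left₀ (norm_nonneg _) (hWnorm t ht) 2
          calc ‖W t‖ ^ 2 ≤ (Real.sqrt G * Dm) ^ 2 := h1
            _ = Dm ^ 2 * G := by
                rw [mul_pow, Real.sq_sqrt hG0]; ring
        have hexp : ‖M (t + 1)‖ ^ 2 = ‖M t‖ ^ 2 + 2 * ⟪M t, W t⟫ + ‖W t‖ ^ 2 := by
          rw [hstep]; exact norm_add_sq_real _ _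
        have hεb : ε t ≤ Dm ^ 2 * G / 2 := hεle t ht
        have : ‖M (t + 1)‖ ^ 2 ≤ 2 * Dm ^ 2 * G * (t : ℝ) + 2 * Dm ^ 2 * G := by
          rw [hexp]
          have := hMW t ht
          nlinarith
        calc ‖M (t + 1)‖ ^ 2 ≤ 2 * Dm ^ 2 * G * (t : ℝ) + 2 * Dm ^ 2 * G := this
          _ = 2 * Dm ^ 2 * G * ((t : ℝ) + 1) := by ring
          _ = 2 * Dm ^ 2 * G * ((t + 1 : ℕ) : ℝ) := by push_cast; ring
  -- rewrite the gap as ⟪h, M T⟫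
  have hgap :
      (∑ t ∈ Finset.range T, (D t).exp (fun p => (⟪h, Φ (x t) p (s (y t))⟫)))
        - (∑ t ∈ Finset.range T,
            (D t).exp (fun p => (μ t p).exp (fun y' => (⟪h, Φ (x t) p (s y')⟫))))
        = ⟪h, M T⟫ := by
    rw [hM, inner_sum, ← Finset.sum_sub_distrib]
    refine Finset.sum_congr rfl fun t ht => ?_
    have htT : t < T := Finset.mem_range.mp ht
    rw [FinDist.exp_sub]
    rw [hW, FinDist.inner_exp]
    refine (D t).exp_congr fun p hp => ?_
    have hμp := hμ t htT p hp
    have hin : (μ t p).exp (fun y' => (⟪h, Φ (x t) p (s y')⟫ : ℝ))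
        = ⟪h, Φ (x t) p p⟫ := by
      have h1 : (μ t p).exp (fun y' => Φ (x t) p (s y'))
          = Φ (x t) p ((μ t p).exp (fun y' => s y')) :=
        (μ t p).map_exp (Φ (x t) p) _
      rw [← FinDist.inner_exp (μ t p) h (fun y' => Φ (x t) p (s y')), h1, hμp]
    rw [hin, map_sub, inner_sub_right]
  rw [hgap]
  -- final Cauchy–Schwarz step
  calc |⟪h, M T⟫| ≤ ‖h‖ * ‖M T‖ := abs_real_inner_le_norm _ _
    _ ≤ ‖h‖ * Real.sqrt (2 * Dm ^ 2 * G * (T : ℝ)) := by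
        refine mul_le_mul_of_nonneg_left ?_ (norm_nonneg _)
        have := hMsq T le_rfl
        have hnorm : ‖M T‖ = Real.sqrt (‖M T‖ ^ 2) :=
          (Real.sqrt_sq (norm_nonneg _)).symm
        rw [hnorm]
        exact Real.sqrt_le_sqrt this
end

section
/- (Example 4.8, explicit finite-dimensional feature maps for first moments.) Let Y = Z be a nonempty subset of ℝ^d with ‖z − z′‖_2 ≤ D for all z, z′ ∈ Z. Let g_1, …, g_r : X × ℝ^d → ℝ^d be arbitrary functions with sup_{x∈X, p∈Z} ‖g_j(x,p)‖_2 ≤ B for every j, and define Φ(x,p) : ℝ^d → ℝ^r by (Φ(x,p)(u))_j := ⟨g_j(x,p), u⟩, so that ‖Φ(x,p)‖_op² ≤ r·B². Let y_1,…,y_T ∈ Z be realized outcomes with targets z_t := y_t, and suppose the EVI condition holds with tolerances ε_t ≤ D²·r·B²/2. Then for every j ∈ {1,…,r}, | Σ_{t=1}^T E_{p∼D_t}[ ⟨g_j(x_t,p), y_t − p⟩ ] | ≤ sqrt( 2·r·B²·D²·T ). -/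
open scoped BigOperators RealInnerProductSpace

/-- Example 4.8: explicit finite-dimensional feature maps for
first moments.  With `H = ℝ^r`, `Φ(x,p)(u)_j = ⟨g_j(x,p), u⟩`, targets
`z_t = y_t ∈ Z`, and EVI tolerances `ε_t ≤ D²·r·B²/2`, for every `j`:
`|∑_t E_{p∼D_t} ⟨g_j(x_t,p), y_t − p⟩| ≤ sqrt(2·r·B²·D²·T)`. -/
theorem stmt_8
    {X : Type*} [Nonempty X] {d r : ℕ} (hd : 1 ≤ d) (hr : 1 ≤ r)
    (Z : Set (EuclideanSpace ℝ (Fin d))) (hZ : Z.Nonempty)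
    (Dm : ℝ) (hDiam : ∀ z ∈ Z, ∀ z' ∈ Z, ‖z - z'‖ ≤ Dm)
    (B : ℝ)
    (g : Fin r → X → EuclideanSpace ℝ (Fin d) → EuclideanSpace ℝ (Fin d))
    (hB : ∀ (j : Fin r) (x : X), ∀ p ∈ Z, ‖g j x p‖ ≤ B)
    (T : ℕ) (hT : 1 ≤ T)
    (x : ℕ → X) (y : ℕ → EuclideanSpace ℝ (Fin d)) (hy : ∀ t < T, y t ∈ Z)
    (D : ℕ → FinDist (EuclideanSpace ℝ (Fin d)))
    (hD : ∀ t < T, (D t).support ⊆ Z)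
    (ε : ℕ → ℝ) (hε : ∀ t < T, 0 ≤ ε t)
    (hεle : ∀ t < T, ε t ≤ Dm ^ 2 * (r : ℝ) * B ^ 2 / 2)
    (hEVI : ∀ t < T, ∀ z' ∈ Z,
      (D t).exp (fun p =>
        (⟪(∑ τ ∈ Finset.range t, (D τ).exp (fun q =>
            (WithLp.equiv 2 (∀ _ : Fin r, ℝ)).symm
              (fun j => (⟪g j (x τ) q, y τ - q⟫ : ℝ)))),
          (WithLp.equiv 2 (∀ _ : Fin r, ℝ)).symm
            (fun j => (⟪g j (x t) p, z' - p⟫ : ℝ))⟫)) ≤ ε t)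
    (j : Fin r) :
    |∑ t ∈ Finset.range T, (D t).exp (fun p => (⟪g j (x t) p, y t - p⟫ : ℝ))| ≤
      Real.sqrt (2 * (r : ℝ) * B ^ 2 * Dm ^ 2 * (T : ℝ)) := by
  classical
  obtain ⟨z0, hz0⟩ := hZ
  obtain ⟨x0⟩ := ‹Nonempty X›
  have hDm0 : 0 ≤ Dm := le_trans (norm_nonneg _) (hDiam z0 hz0 z0 hz0)
  have hB0 : 0 ≤ B := le_trans (norm_nonneg _) (hB j x0 z0 hz0)
  set Φ : X → EuclideanSpace ℝ (Fin d) → EuclideanSpace ℝ (Fin d) →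
      EuclideanSpace ℝ (Fin r) := fun xx p u =>
    (WithLp.equiv 2 (∀ _ : Fin r, ℝ)).symm (fun j => (⟪g j xx p, u⟫ : ℝ)) with hΦ
  set W : ℕ → EuclideanSpace ℝ (Fin r) :=
    fun t => (D t).exp (fun q => Φ (x t) q (y t - q)) with hW
  set M : ℕ → EuclideanSpace ℝ (Fin r) :=
    fun t => ∑ τ ∈ Finset.range t, W τ with hM
  set C : ℝ := Real.sqrt ((r : ℝ) * B ^ 2 * Dm ^ 2) with hC
  have hK0 : (0:ℝ) ≤ (r : ℝ) * B ^ 2 * Dm ^ 2 := by positivity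
  have hC0 : 0 ≤ C := Real.sqrt_nonneg _
  have hCsq : C ^ 2 = (r : ℝ) * B ^ 2 * Dm ^ 2 := Real.sq_sqrt hK0
  -- pointwise bound on Φ
  have hΦbound : ∀ t < T, ∀ p ∈ Z, ‖Φ (x t) p (y t - p)‖ ≤ C := by
    intro t ht p hp
    have hnorm : ‖Φ (x t) p (y t - p)‖ =
        Real.sqrt (∑ i : Fin r, ‖(⟪g i (x t) p, y t - p⟫ : ℝ)‖ ^ 2) := by
      rw [EuclideanSpace.norm_eq]
      rfl
    rw [hnorm]
    apply Real.sqrt_le_sqrt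
    calc ∑ i : Fin r, ‖(⟪g i (x t) p, y t - p⟫ : ℝ)‖ ^ 2
        ≤ ∑ _i : Fin r, B ^ 2 * Dm ^ 2 := by
          apply Finset.sum_le_sum
          intro i _
          have h1 : ‖(⟪g i (x t) p, y t - p⟫ : ℝ)‖ ≤ B * Dm := by
            calc ‖(⟪g i (x t) p, y t - p⟫ : ℝ)‖
                ≤ ‖g i (x t) p‖ * ‖y t - p‖ := by
                  simpa using abs_real_inner_le_norm (g i (x t) p) (y t - p)
              _ ≤ B * Dm := by
                  exact mul_le_mul (hB i (x t) p hp)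
                    (hDiam (y t) (hy t ht) p hp) (norm_nonneg _) hB0
          calc ‖(⟪g i (x t) p, y t - p⟫ : ℝ)‖ ^ 2 ≤ (B * Dm) ^ 2 := by
                apply pow_le_pow_left₀ (norm_nonneg _) h1
            _ = B ^ 2 * Dm ^ 2 := by ring
      _ = (r : ℝ) * B ^ 2 * Dm ^ 2 := by
          simp [Finset.sum_const]; ring
  -- bound on W
  have hWbound : ∀ t < T, ‖W t‖ ≤ C := by
    intro t ht
    have h1 : ‖W t‖ ≤ ∑ i, ‖(D t).w i • Φ (x t) ((D t).pt i) (y t - (D t).pt i)‖ :=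
      norm_sum_le _ _
    have h2 : ∑ i, ‖(D t).w i • Φ (x t) ((D t).pt i) (y t - (D t).pt i)‖
        ≤ ∑ i, (D t).w i * C := by
      apply Finset.sum_le_sum
      intro i _
      rw [norm_smul, Real.norm_eq_abs, abs_of_nonneg ((D t).w_nonneg i)]
      by_cases hwi : (D t).w i = 0
      · simp [hwi]
      · have hmem : (D t).pt i ∈ Z := hD t ht ⟨i, hwi, rfl⟩
        exact mul_le_mul_of_nonneg_left (hΦbound t ht _ hmem) ((D t).w_nonneg i)
    calc ‖W t‖ ≤ ∑ i, (D t).w i * C := le_trans h1 h2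
      _ = C := by rw [← Finset.sum_mul, (D t).w_sum, one_mul]
  -- inner product with expectation
  have hinner : ∀ t < T, (⟪M t, W t⟫ : ℝ) ≤ ε t := by
    intro t ht
    have := hEVI t ht (y t) (hy t ht)
    have heq : (D t).exp (fun p => (⟪M t, Φ (x t) p (y t - p)⟫ : ℝ))
        = (⟪M t, W t⟫ : ℝ) := by
      simp only [hW, FinDist.exp, inner_sum, real_inner_smul_right, smul_eq_mul]
    rw [← heq]
    simpa [hM, hW, hΦ, FinDist.exp] using this
  -- recursion for the squared norm
  have key : ∀ n ≤ T, ‖M n‖ ^ 2 ≤ (n : ℝ) * (2 * (r : ℝ) * B ^ 2 * Dm ^ 2) := by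
    intro n
    induction n with
    | zero => intro _; simp [hM]
    | succ n ih =>
      intro hn
      have hnT : n < T := hn
      have hIH := ih (le_of_lt hnT)
      have hstep : M (n + 1) = M n + W n := by
        simp [hM, Finset.sum_range_succ]
      rw [hstep, norm_add_sq_real]
      have h1 : (⟪M n, W n⟫ : ℝ) ≤ ε n := hinner n hnT
      have h2 : ‖W n‖ ^ 2 ≤ C ^ 2 := by
        apply pow_le_pow_left₀ (norm_nonneg _) (hWbound n hnT)
      have h3 : ε n ≤ Dm ^ 2 * (r : ℝ) * B ^ 2 / 2 := hεle n hnT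
      have : ‖M n‖ ^ 2 + 2 * ⟪M n, W n⟫ + ‖W n‖ ^ 2
          ≤ (n : ℝ) * (2 * (r : ℝ) * B ^ 2 * Dm ^ 2)
            + 2 * (Dm ^ 2 * (r : ℝ) * B ^ 2 / 2) + ((r : ℝ) * B ^ 2 * Dm ^ 2) := by
        have := h2.trans_eq hCsq
        gcongr
        linarith
      calc ‖M n‖ ^ 2 + 2 * ⟪M n, W n⟫ + ‖W n‖ ^ 2
          ≤ (n : ℝ) * (2 * (r : ℝ) * B ^ 2 * Dm ^ 2)
            + 2 * (Dm ^ 2 * (r : ℝ) * B ^ 2 / 2) + ((r : ℝ) * B ^ 2 * Dm ^ 2) := this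
        _ = ((n : ℝ) + 1) * (2 * (r : ℝ) * B ^ 2 * Dm ^ 2) := by ring
        _ = ((n + 1 : ℕ) : ℝ) * (2 * (r : ℝ) * B ^ 2 * Dm ^ 2) := by push_cast; ring
  -- the j-th coordinate of M T is the target sum
  have hcoord : (M T) j =
      ∑ t ∈ Finset.range T, (D t).exp (fun p => (⟪g j (x t) p, y t - p⟫ : ℝ)) := by
    simp only [hM, hW, hΦ, FinDist.exp]
    rw [WithLp.ofLp_sum, Finset.sum_apply]
    apply Finset.sum_congr rfl
    intro t _
    rw [WithLp.ofLp_sum, Finset.sum_apply]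
    rfl
  -- |coordinate| ≤ norm
  have habs : |(M T) j| ≤ ‖M T‖ := by
    rw [EuclideanSpace.norm_eq]
    have : |(M T) j| = Real.sqrt (‖(M T) j‖ ^ 2) := by
      rw [Real.sqrt_sq_eq_abs, Real.norm_eq_abs, abs_abs]
    rw [this]
    apply Real.sqrt_le_sqrt
    exact Finset.single_le_sum (f := fun i => ‖(M T) i‖ ^ 2)
      (fun i _ => by positivity) (Finset.mem_univ j)
  rw [← hcoord]
  calc |(M T) j| ≤ ‖M T‖ := habs
    _ = Real.sqrt (‖M T‖ ^ 2) := by rw [Real.sqrt_sq (norm_nonneg _)]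
    _ ≤ Real.sqrt (2 * (r : ℝ) * B ^ 2 * Dm ^ 2 * (T : ℝ)) := by
        apply Real.sqrt_le_sqrt
        calc ‖M T‖ ^ 2 ≤ (T : ℝ) * (2 * (r : ℝ) * B ^ 2 * Dm ^ 2) := key T le_rfl
          _ = 2 * (r : ℝ) * B ^ 2 * Dm ^ 2 * (T : ℝ) := by ring
end

section
/- (Corollary 4.9, indistinguishability with respect to first and second moments on the unit ball.) Let Y = {y ∈ ℝ^d : ‖y‖_2 ≤ 1}, let W := ℝ^d × Sym_d(ℝ) with inner product ⟨(v,Q),(v′,Q′)⟩ := ⟨v,v′⟩ + Tr(Q Q′), let s : Y → W be s(y) := (y, y y^⊤), and let Z := {(v,Q) ∈ W : there exists a Borel probability measure μ on Y with ∫ y dμ = v and ∫ y y^⊤ dμ = Q}. Suppose ‖Φ(x,p)‖_op² ≤ G for all x ∈ X, p ∈ Z. Let y_1,…,y_T ∈ Y be realized outcomes with targets z_t := s(y_t), suppose the EVI condition holds with tolerances ε_t ≤ 4G, and suppose for each t and each p in the support of D_t, μ_{t,p} is a finitely supported probability measure on Y with E_{ỹ∼μ_{t,p}}[s(ỹ)]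 = p. Then for every h ∈ H, the distinguisher f(x,p,y) := ⟨h, Φ(x,p)(s(y))⟩_H satisfies OIGap_T(f) ≤ 4·‖h‖_H·sqrt(T·G). -/
open scoped BigOperators RealInnerProductSpace
open MeasureTheory

/-- The space of symmetric `d × d` real matrices (as a subspace of the
Euclidean space of all `d × d` matrices with the Frobenius inner product). -/
def symMatrices (d : ℕ) : Submodule ℝ (EuclideanSpace ℝ (Fin d × Fin d)) where
  carrier := {Q | ∀ i j, Q (i, j) = Q (j, i)}
  add_mem' := by
    intro A B hA hB i j
    show A (i, j) + B (i, j) = A (j, i) + B (j, i)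
    rw [hA i j, hB i j]
  zero_mem' := by intro i j; rfl
  smul_mem' := by
    intro c A hA i j
    show c * A (i, j) = c * A (j, i)
    rw [hA i j]

/-- `W = ℝ^d × Sym_d(ℝ)` with inner product
`⟨(v,Q),(v',Q')⟩ = ⟨v,v'⟩ + Tr(QQ')`. -/
abbrev Wspace (d : ℕ) :=
  WithLp 2 (EuclideanSpace ℝ (Fin d) × symMatrices d)

/-- The statistic map `s(y) = (y, y yᵀ)`. -/
noncomputable def sVec (d : ℕ) (y : EuclideanSpace ℝ (Fin d)) : Wspace d :=
  (WithLp.equiv 2 (EuclideanSpace ℝ (Fin d) × symMatrices d)).symm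
    (y, ⟨(WithLp.equiv 2 (∀ _ : Fin d × Fin d, ℝ)).symm fun q => y q.1 * y q.2,
      fun i j => mul_comm (y i) (y j)⟩)

/-- The set of pairs of first and second moments of Borel probability measures
on the closed unit ball of `ℝ^d`. -/
def ballMomentSet (d : ℕ) : Set (Wspace d) :=
  {p | ∃ μ : Measure (EuclideanSpace ℝ (Fin d)), IsProbabilityMeasure μ ∧
    μ {y : EuclideanSpace ℝ (Fin d) | ‖y‖ ≤ 1}ᶜ = 0 ∧
    p.ofLp.1 = (∫ y, y ∂μ) ∧
    ∀ i j, (p.ofLp.2 : EuclideanSpace ℝ (Fin d × Fin d)) (i, j) = ∫ y, y i * y j ∂μ}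


section auxlemmas

namespace FinDist

variable {alpha : Type*} {V V' : Type*} [NormedAddCommGroup V] [NormedSpace ℝ V]
  [NormedAddCommGroup V'] [NormedSpace ℝ V']

lemma exp_congr_s9 (D : FinDist alpha) {f g : alpha → V} (hfg : ∀ a ∈ D.support, f a = g a) :
    D.exp f = D.exp g := by
  refine Finset.sum_congr rfl fun i _ => ?_
  by_cases hw : D.w i = 0
  · simp [hw]
  · rw [hfg _ ⟨i, hw, rfl⟩]

lemma exp_comp (D : FinDist alpha) (f : alpha → V) (g : V →ₗ[ℝ] V') :
    D.exp (fun a => g (f a)) = g (D.exp f) := by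
  simp [FinDist.exp, map_sum, _root_.map_smul]

lemma exp_sub_s9 (D : FinDist alpha) (f g : alpha → V) :
    D.exp (fun a => f a - g a) = D.exp f - D.exp g := by
  simp [FinDist.exp, smul_sub, Finset.sum_sub_distrib]

lemma norm_exp_le (D : FinDist alpha) (f : alpha → V) {c : ℝ} (hc : 0 ≤ c)
    (hf : ∀ a ∈ D.support, ‖f a‖ ≤ c) : ‖D.exp f‖ ≤ c := by
  calc ‖D.exp f‖ ≤ ∑ i, ‖D.w i • f (D.pt i)‖ := norm_sum_le _ _
    _ ≤ ∑ i, D.w i * c := by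
        refine Finset.sum_le_sum fun i _ => ?_
        rw [norm_smul, Real.norm_eq_abs, abs_of_nonneg (D.w_nonneg i)]
        by_cases hw : D.w i = 0
        · simp [hw, hc]
        · exact mul_le_mul_of_nonneg_left (hf _ ⟨i, hw, rfl⟩) (D.w_nonneg i)
    _ = c := by rw [← Finset.sum_mul, D.w_sum, one_mul]

lemma support_nonempty (D : FinDist alpha) : ∃ a, a ∈ D.support := by
  by_contra hcon
  push_neg at hcon
  have hz : ∀ i, D.w i = 0 := fun i => by
    by_contra hw; exact hcon (D.pt i) ⟨i, hw, rfl⟩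
  have hs := D.w_sum
  rw [Finset.sum_eq_zero (fun i _ => hz i)] at hs
  norm_num at hs

end FinDist

section svec
variable {d : ℕ}

lemma sVec_fst (y : EuclideanSpace ℝ (Fin d)) : (sVec d y).ofLp.1 = y := rfl

lemma sVec_snd (y : EuclideanSpace ℝ (Fin d)) (i j : Fin d) :
    (((sVec d y).ofLp.2 : symMatrices d) : EuclideanSpace ℝ (Fin d × Fin d)) (i, j) = y i * y j := rfl

lemma norm_sVec_sq (y : EuclideanSpace ℝ (Fin d)) :
    ‖sVec d y‖ ^ 2 = ‖y‖ ^ 2 + (‖y‖ ^ 2) ^ 2 := by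
  rw [WithLp.prod_norm_sq_eq_of_L2]
  congr 1
  have h2 : ‖WithLp.snd (sVec d y)‖ = ‖(((sVec d y).ofLp.2 : symMatrices d) : EuclideanSpace ℝ (Fin d × Fin d))‖ := rfl
  rw [h2]
  have hy : ‖y‖ ^ 2 = ∑ i, y i ^ 2 := by
    rw [PiLp.norm_sq_eq_of_L2]
    simp [sq_abs]
  have hm : ‖(((sVec d y).ofLp.2 : symMatrices d) : EuclideanSpace ℝ (Fin d × Fin d))‖ ^ 2
      = ∑ q : Fin d × Fin d, (y q.1 * y q.2) ^ 2 := by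
    rw [PiLp.norm_sq_eq_of_L2]
    refine Finset.sum_congr rfl fun q _ => ?_
    rw [show (((sVec d y).ofLp.2 : symMatrices d) : EuclideanSpace ℝ (Fin d × Fin d)) q = y q.1 * y q.2 from rfl]
    rw [Real.norm_eq_abs, sq_abs]
  rw [hm, hy, Fintype.sum_prod_type, sq, Finset.sum_mul_sum]
  refine Finset.sum_congr rfl fun i _ => ?_
  refine Finset.sum_congr rfl fun j _ => ?_
  ring

lemma norm_sVec_le (y : EuclideanSpace ℝ (Fin d)) (hy : ‖y‖ ≤ 1) :
    ‖sVec d y‖ ≤ Real.sqrt 2 := by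
  refine Real.le_sqrt_of_sq_le ?_
  rw [norm_sVec_sq]
  have h1 : ‖y‖ ^ 2 ≤ 1 := by nlinarith [norm_nonneg y]
  nlinarith [sq_nonneg (‖y‖^2), norm_nonneg y]

lemma sVec_mem_ballMomentSet (y : EuclideanSpace ℝ (Fin d)) (hy : ‖y‖ ≤ 1) :
    sVec d y ∈ ballMomentSet d := by
  refine ⟨Measure.dirac y, inferInstance, ?_, ?_, ?_⟩
  · rw [MeasureTheory.Measure.dirac_apply]
    simp [Set.indicator_apply, hy]
  · rw [MeasureTheory.integral_dirac]
    rfl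
  · intro i j
    rw [MeasureTheory.integral_dirac]
    rfl

end svec


lemma FinDist.exp_inner {alpha : Type*} {H : Type*} [NormedAddCommGroup H]
    [InnerProductSpace ℝ H] (D : FinDist alpha) (u : H) (f : alpha → H) :
    D.exp (fun a => (⟪u, f a⟫ : ℝ)) = ⟪u, D.exp f⟫ := by
  simp only [FinDist.exp, inner_sum, real_inner_smul_right, smul_eq_mul]

lemma FinDist.exp_clm {alpha V V' : Type*} [NormedAddCommGroup V] [NormedSpace ℝ V]
    [NormedAddCommGroup V'] [NormedSpace ℝ V'] (D : FinDist alpha) (f : alpha → V)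
    (g : V →L[ℝ] V') :
    D.exp (fun a => g (f a)) = g (D.exp f) := by
  simp [FinDist.exp, map_sum, _root_.map_smul]

/-- Corollary 4.9: indistinguishability with respect to first
and second moments on the unit ball.  With targets `s(y_t) = (y_t, y_t y_tᵀ)`,
EVI tolerances `ε_t ≤ 4G`, and generating measures on the unit ball matching
the forecast moments, every distinguisher `f(x,p,y) = ⟪h, Φ(x,p)(s(y))⟫`
satisfies `OIGap_T(f) ≤ 4 ‖h‖ sqrt(T G)`. -/
theorem stmt_9
    {H : Type*} [NormedAddCommGroup H] [InnerProductSpace ℝ H] [CompleteSpace H]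
    {X : Type*} [Nonempty X] {d : ℕ} (hd : 1 ≤ d)
    (Φ : X → Wspace d → (Wspace d →L[ℝ] H))
    (G : ℝ) (hG : ∀ (x : X), ∀ p ∈ ballMomentSet d, ‖Φ x p‖ ^ 2 ≤ G)
    (T : ℕ) (hT : 1 ≤ T)
    (x : ℕ → X) (y : ℕ → EuclideanSpace ℝ (Fin d)) (hy : ∀ t < T, ‖y t‖ ≤ 1)
    (D : ℕ → FinDist (Wspace d))
    (hD : ∀ t < T, (D t).support ⊆ ballMomentSet d)
    (ε : ℕ → ℝ) (hε : ∀ t < T, 0 ≤ ε t) (hεle : ∀ t < T, ε t ≤ 4 * G)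
    (hEVI : ∀ t < T, ∀ z' ∈ ballMomentSet d,
      (D t).exp (fun p =>
        (⟪(∑ τ ∈ Finset.range t,
            (D τ).exp (fun q => Φ (x τ) q (sVec d (y τ) - q))),
          Φ (x t) p (z' - p)⟫)) ≤ ε t)
    (μ : ℕ → Wspace d → FinDist (EuclideanSpace ℝ (Fin d)))
    (hμY : ∀ t < T, ∀ p ∈ (D t).support, ∀ k, ‖(μ t p).pt k‖ ≤ 1)
    (hμ : ∀ t < T, ∀ p ∈ (D t).support, (μ t p).exp (fun y' => sVec d y') = p)
    (h : H) :
    |(∑ t ∈ Finset.range T, (D t).exp (fun p => (⟪h, Φ (x t) p (sVec d (y t))⟫)))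
      - (∑ t ∈ Finset.range T, (D t).exp (fun p =>
          (μ t p).exp (fun y' => (⟪h, Φ (x t) p (sVec d y')⟫))))| ≤
      4 * ‖h‖ * Real.sqrt ((T : ℝ) * G) := by
    classical
  set wv : ℕ → H := fun t => (D t).exp (fun q => Φ (x t) q (sVec d (y t) - q)) with hwv
  set M : ℕ → H := fun t => ∑ τ ∈ Finset.range t, wv τ with hMdef
  have hT0 : 0 < T := hT
  -- G is nonnegative
  obtain ⟨p0, hp0⟩ := (D 0).support_nonempty
  have hGnn : 0 ≤ G := le_trans (sq_nonneg _) (hG (x 0) p0 (hD 0 hT0 hp0))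
  -- norms of forecasts in the support
  have hpnorm : ∀ t < T, ∀ p ∈ (D t).support, ‖p‖ ≤ Real.sqrt 2 := by
    intro t ht p hp
    rw [← hμ t ht p hp]
    refine (μ t p).norm_exp_le _ (Real.sqrt_nonneg 2) ?_
    rintro a ⟨k, -, rfl⟩
    exact norm_sVec_le _ (hμY t ht p hp k)
  -- operator norm bound
  have hΦn : ∀ (x' : X), ∀ p ∈ ballMomentSet d, ‖Φ x' p‖ ≤ Real.sqrt G :=
    fun x' p hp => Real.le_sqrt_of_sq_le (hG x' p hp)
  -- norm bound on the increments
  have hwnorm : ∀ t < T, ‖wv t‖ ≤ 2 * Real.sqrt 2 * Real.sqrt G := by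
    intro t ht
    refine (D t).norm_exp_le _ (by positivity) ?_
    intro p hp
    have hpm : p ∈ ballMomentSet d := hD t ht hp
    calc ‖Φ (x t) p (sVec d (y t) - p)‖
        ≤ ‖Φ (x t) p‖ * ‖sVec d (y t) - p‖ := (Φ (x t) p).le_opNorm _
      _ ≤ Real.sqrt G * (Real.sqrt 2 + Real.sqrt 2) := by
          refine mul_le_mul (hΦn (x t) p hpm) ?_ (norm_nonneg _) (Real.sqrt_nonneg G)
          calc ‖sVec d (y t) - p‖ ≤ ‖sVec d (y t)‖ + ‖p‖ := norm_sub_le _ _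
            _ ≤ Real.sqrt 2 + Real.sqrt 2 :=
                add_le_add (norm_sVec_le _ (hy t ht)) (hpnorm t ht p hp)
      _ = 2 * Real.sqrt 2 * Real.sqrt G := by ring
  have h2sq : Real.sqrt 2 ^ 2 = 2 := Real.sq_sqrt (by norm_num)
  have hGsq : Real.sqrt G ^ 2 = G := Real.sq_sqrt hGnn
  have hwsq : ∀ t < T, ‖wv t‖ ^ 2 ≤ 8 * G := by
    intro t ht
    nlinarith [hwnorm t ht, norm_nonneg (wv t), Real.sqrt_nonneg 2, Real.sqrt_nonneg G]
  -- the EVI bound on the inner products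
  have hinner : ∀ t < T, (⟪M t, wv t⟫ : ℝ) ≤ ε t := by
    intro t ht
    have hEv : (D t).exp (fun p => (⟪M t, Φ (x t) p (sVec d (y t) - p)⟫ : ℝ)) ≤ ε t :=
      hEVI t ht (sVec d (y t)) (sVec_mem_ballMomentSet _ (hy t ht))
    rwa [FinDist.exp_inner] at hEv
  -- the martingale bound
  have hMsq : ∀ t ≤ T, ‖M t‖ ^ 2 ≤ 16 * t * G := by
    intro t
    induction t with
    | zero => intro _; simp [hMdef]
    | succ t ih =>
      intro hsucc
      have ht : t < T := hsucc
      have hstep : M (t + 1) = M t + wv t := by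
        rw [hMdef]; exact Finset.sum_range_succ _ _
      rw [hstep, @norm_add_sq_real]
      have h1 := hinner t ht
      have h2 := hwsq t ht
      have h3 := hεle t ht
      have h4 := ih (le_of_lt ht)
      push_cast
      nlinarith
  have hMT : ‖M T‖ ≤ 4 * Real.sqrt ((T : ℝ) * G) := by
    have h1 : ‖M T‖ ≤ Real.sqrt (16 * T * G) := Real.le_sqrt_of_sq_le (hMsq T le_rfl)
    calc ‖M T‖ ≤ Real.sqrt (16 * T * G) := h1
      _ = Real.sqrt 16 * Real.sqrt ((T : ℝ) * G) := by
          rw [mul_assoc, Real.sqrt_mul (by norm_num : (0:ℝ) ≤ 16)]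
      _ = 4 * Real.sqrt ((T : ℝ) * G) := by
          rw [show (16 : ℝ) = 4 ^ 2 by norm_num, Real.sqrt_sq (by norm_num : (0:ℝ) ≤ 4)]
  -- the gap is ⟪h, M T⟫
  have hgap : (∑ t ∈ Finset.range T, (D t).exp (fun p => (⟪h, Φ (x t) p (sVec d (y t))⟫ : ℝ)))
      - (∑ t ∈ Finset.range T, (D t).exp (fun p =>
          (μ t p).exp (fun y' => (⟪h, Φ (x t) p (sVec d y')⟫ : ℝ))))
      = ⟪h, M T⟫ := by
    have hMT' : M T = ∑ τ ∈ Finset.range T, wv τ := rfl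
    rw [← Finset.sum_sub_distrib, hMT', inner_sum]
    refine Finset.sum_congr rfl fun t htm => ?_
    have ht : t < T := Finset.mem_range.mp htm
    have e1 : (D t).exp (fun p => (μ t p).exp (fun y' => (⟪h, Φ (x t) p (sVec d y')⟫ : ℝ)))
        = (D t).exp (fun p => (⟪h, Φ (x t) p p⟫ : ℝ)) := by
      refine (D t).exp_congr_s9 fun p hp => ?_
      rw [FinDist.exp_inner, FinDist.exp_clm, hμ t ht p hp]
    rw [e1, ← FinDist.exp_sub_s9]
    have e2 : (D t).exp (fun p => (⟪h, Φ (x t) p (sVec d (y t))⟫ : ℝ) - ⟪h, Φ (x t) p p⟫)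
        = (D t).exp (fun p => (⟪h, Φ (x t) p (sVec d (y t) - p)⟫ : ℝ)) :=
      (D t).exp_congr_s9 fun p _ => by rw [map_sub, inner_sub_right]
    rw [e2, FinDist.exp_inner]
  rw [hgap]
  calc |(⟪h, M T⟫ : ℝ)| ≤ ‖h‖ * ‖M T‖ := abs_real_inner_le_norm h (M T)
    _ ≤ ‖h‖ * (4 * Real.sqrt ((T : ℝ) * G)) :=
        mul_le_mul_of_nonneg_left hMT (norm_nonneg h)
    _ = 4 * ‖h‖ * Real.sqrt ((T : ℝ) * G) := by ring
end auxlemmas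
end

section
/- (Equation (S), S-Lemma characterization of the moment set of the unit ball.) For d ≥ 1, the set Z := {(v,Q) ∈ ℝ^d × Sym_d(ℝ) : there exists a Borel probability measure μ on the closed unit ball {y ∈ ℝ^d : ‖y‖_2 ≤ 1} with ∫ y dμ = v and ∫ y y^⊤ dμ = Q} is equal to the set M := {(v,Q) ∈ ℝ^d × Sym_d(ℝ) : Q is positive semidefinite, Q − v v^⊤ is positive semidefinite, and Tr(Q) ≤ 1}. -/
open scoped BigOperators
open MeasureTheory
open scoped Matrix


variable {d : ℕ}

lemma sum_sq_eq_normsq (y : EuclideanSpace ℝ (Fin d)) : ∑ i, (y i)^2 = ‖y‖^2 := by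
  rw [EuclideanSpace.norm_eq, Real.sq_sqrt (by positivity)]
  simp [sq_abs]

lemma abs_coord_le (y : EuclideanSpace ℝ (Fin d)) (i : Fin d) (h : ‖y‖ ≤ 1) : |y i| ≤ 1 := by
  have h1 : (y i)^2 ≤ ∑ j, (y j)^2 :=
    Finset.single_le_sum (f := fun j => (y j)^2) (fun _ _ => sq_nonneg _) (Finset.mem_univ i)
  rw [sum_sq_eq_normsq] at h1
  nlinarith [abs_nonneg (y i), sq_abs (y i), norm_nonneg y]

lemma fwd {d : ℕ} (v : EuclideanSpace ℝ (Fin d)) (Q : Matrix (Fin d) (Fin d) ℝ)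
    (μ : Measure (EuclideanSpace ℝ (Fin d))) (hprob : IsProbabilityMeasure μ)
    (h0 : μ {y : EuclideanSpace ℝ (Fin d) | ‖y‖ ≤ 1}ᶜ = 0)
    (hv : v = ∫ y, y ∂μ)
    (hQ : Q = Matrix.of fun i j => ∫ y, y i * y j ∂μ) :
    Q.PosSemidef ∧ (Q - Matrix.vecMulVec v v).PosSemidef ∧ Q.trace ≤ 1 := by
  have hae : ∀ᵐ y ∂μ, ‖y‖ ≤ 1 := by
    rw [ae_iff, ← Set.compl_setOf]; exact h0
  -- integrability
  have hmeas : ∀ i : Fin d, Continuous (fun y : EuclideanSpace ℝ (Fin d) => y i) :=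
    fun i => (EuclideanSpace.proj (𝕜 := ℝ) i).continuous
  have hint1 : ∀ i : Fin d, Integrable (fun y : EuclideanSpace ℝ (Fin d) => y i) μ := by
    intro i
    refine ⟨(hmeas i).aestronglyMeasurable, ?_⟩
    refine HasFiniteIntegral.of_bounded (C := 1) ?_
    filter_upwards [hae] with y hy
    simpa using abs_coord_le y i hy
  have hint2 : ∀ i j : Fin d, Integrable (fun y : EuclideanSpace ℝ (Fin d) => y i * y j) μ := by
    intro i j
    refine ⟨((hmeas i).mul (hmeas j)).aestronglyMeasurable, ?_⟩
    refine HasFiniteIntegral.of_bounded (C := 1) ?_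
    filter_upwards [hae] with y hy
    have := abs_coord_le y i hy
    have := abs_coord_le y j hy
    simp only [Real.norm_eq_abs, abs_mul]
    nlinarith [abs_nonneg (y i), abs_nonneg (y j)]
  have hintid : Integrable (fun y : EuclideanSpace ℝ (Fin d) => y) μ := by
    refine ⟨aestronglyMeasurable_id, ?_⟩
    exact HasFiniteIntegral.of_bounded (C := 1) hae
  -- coordinates of v
  have hvi : ∀ i : Fin d, v i = ∫ y, y i ∂μ := by
    intro i
    have := (EuclideanSpace.proj (𝕜 := ℝ) i).integral_comp_comm hintid
    rw [hv]
    exact this.symm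
  -- key quadratic form computations
  have hf_int : ∀ x : Fin d → ℝ, Integrable (fun y : EuclideanSpace ℝ (Fin d) => ∑ j, x j * y j) μ :=
    fun x => integrable_finset_sum _ (fun j _ => (hint1 j).const_mul (x j))
  have hsq_expand : ∀ (x : Fin d → ℝ) (y : EuclideanSpace ℝ (Fin d)),
      (∑ j, x j * y j)^2 = ∑ j, ∑ k, (x j * x k) * (y j * y k) := by
    intro x y
    rw [sq, Finset.sum_mul_sum]
    congr 1; ext j; congr 1; ext k; ring
  have hf2_int : ∀ x : Fin d → ℝ,
      Integrable (fun y : EuclideanSpace ℝ (Fin d) => (∑ j, x j * y j)^2) μ := by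
    intro x
    have : (fun y : EuclideanSpace ℝ (Fin d) => (∑ j, x j * y j)^2)
        = fun y => ∑ j, ∑ k, (x j * x k) * (y j * y k) := funext fun y => hsq_expand x y
    rw [this]
    exact integrable_finset_sum _ (fun j _ =>
      integrable_finset_sum _ (fun k _ => (hint2 j k).const_mul _))
  have hkey : ∀ x : Fin d → ℝ,
      ∫ y, (∑ j, x j * y j)^2 ∂μ = ∑ j, ∑ k, (x j * x k) * Q j k := by
    intro x
    calc ∫ y, (∑ j, x j * y j)^2 ∂μ
        = ∫ y, ∑ j, ∑ k, (x j * x k) * (y j * y k) ∂μ := by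
          congr 1; ext y; exact hsq_expand x y
      _ = ∑ j, ∑ k, (x j * x k) * Q j k := by
          rw [integral_finset_sum _ (fun j _ =>
            integrable_finset_sum _ (fun k _ => (hint2 j k).const_mul _))]
          refine Finset.sum_congr rfl fun j _ => ?_
          rw [integral_finset_sum _ (fun k _ => (hint2 j k).const_mul _)]
          refine Finset.sum_congr rfl fun k _ => ?_
          rw [integral_const_mul, hQ]
          rfl
  have hquadQ : ∀ x : Fin d → ℝ,
      dotProduct (star x) (Q *ᵥ x) = ∑ j, ∑ k, (x j * x k) * Q j k := by
    intro x
    simp only [dotProduct, Matrix.mulVec, star_trivial, Finset.mul_sum]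
    refine Finset.sum_congr rfl fun j _ => Finset.sum_congr rfl fun k _ => by ring
  -- coordinates identity for vvᵀ quadratic form
  have hm : ∀ x : Fin d → ℝ, ∑ j, x j * v j = ∫ y, ∑ j, x j * y j ∂μ := by
    intro x
    rw [integral_finset_sum _ (fun j _ => (hint1 j).const_mul (x j))]
    refine Finset.sum_congr rfl fun j _ => ?_
    rw [hvi j, integral_const_mul]
  have hquadV : ∀ x : Fin d → ℝ,
      dotProduct (star x) ((Matrix.vecMulVec v v) *ᵥ x) = (∑ j, x j * v j)^2 := by
    intro x
    simp only [dotProduct, Matrix.mulVec, Matrix.vecMulVec_apply, star_trivial,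
      Finset.mul_sum, sq, Finset.sum_mul, dotProduct]
    rw [Finset.sum_comm]
    refine Finset.sum_congr rfl fun j _ => Finset.sum_congr rfl fun k _ => by ring
  have hhermQ : Q.IsHermitian := by
    refine Matrix.IsHermitian.ext fun i j => ?_
    simp only [hQ, Matrix.of_apply, star_trivial]
    congr 1; ext y; ring
  have hpsdQ : Q.PosSemidef := by
    refine Matrix.PosSemidef.of_dotProduct_mulVec_nonneg hhermQ fun x => ?_
    rw [hquadQ x, ← hkey x]
    exact integral_nonneg fun y => sq_nonneg _
  refine ⟨hpsdQ, Matrix.PosSemidef.of_dotProduct_mulVec_nonneg ?_ ?_, ?_⟩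
  · -- Q - vvᵀ hermitian
    refine Matrix.IsHermitian.ext fun i j => ?_
    have h1 := Matrix.IsHermitian.apply hhermQ j i
    simp only [Matrix.sub_apply, Matrix.conjTranspose_apply, Matrix.vecMulVec_apply,
      star_trivial] at *
    rw [h1]; ring
  · -- Q - vvᵀ quadratic form nonneg
    intro x
    rw [Matrix.sub_mulVec, dotProduct_sub, hquadQ x, hquadV x, ← hkey x, hm x]
    set m := ∫ y, ∑ j, x j * y j ∂μ with hmdef
    have hexp : ∫ y, (∑ j, x j * y j - m)^2 ∂μ
        = ∫ y, (∑ j, x j * y j)^2 ∂μ - m^2 := by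
      have : (fun y : EuclideanSpace ℝ (Fin d) => (∑ j, x j * y j - m)^2)
          = fun y => (∑ j, x j * y j)^2 - (2*m) * (∑ j, x j * y j) + m^2 := by
        ext y; ring
      have hI2 : Integrable (fun y : EuclideanSpace ℝ (Fin d) =>
          (2*m) * (∑ j, x j * y j)) μ := (hf_int x).const_mul (2*m)
      have hI1 : Integrable (fun y : EuclideanSpace ℝ (Fin d) =>
          (∑ j, x j * y j)^2 - (2*m) * (∑ j, x j * y j)) μ := (hf2_int x).sub hI2
      rw [this, integral_add hI1 (integrable_const _), integral_sub (hf2_int x) hI2,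
        integral_const_mul, integral_const]
      simp [← hmdef, measure_univ]
      ring
    have h2 : 0 ≤ ∫ y, (∑ j, x j * y j - m)^2 ∂μ := integral_nonneg fun y => sq_nonneg _
    rw [hexp] at h2
    linarith
  · -- trace
    have htr : Q.trace = ∫ y, ∑ i, (y i)^2 ∂μ := by
      rw [integral_finset_sum _ (fun i _ => by simpa [sq] using hint2 i i)]
      rw [Matrix.trace]
      refine Finset.sum_congr rfl fun i _ => ?_
      simp only [Matrix.diag_apply, hQ, Matrix.of_apply]
      congr 1; ext y; ring
    rw [htr]
    have : ∫ y, ∑ i, (y i)^2 ∂μ ≤ ∫ (_ : EuclideanSpace ℝ (Fin d)), (1:ℝ) ∂μ := by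
      refine integral_mono_ae (integrable_finset_sum _ (fun i _ => by simpa [sq] using hint2 i i))
        (integrable_const _) ?_
      filter_upwards [hae] with y hy
      rw [sum_sq_eq_normsq]
      nlinarith [norm_nonneg y]
    simpa [measure_univ] using this


variable {d : ℕ}

lemma sum_sq_eq_normsq' (y : EuclideanSpace ℝ (Fin d)) : ∑ i, (y i)^2 = ‖y‖^2 := by
  rw [EuclideanSpace.norm_eq, Real.sq_sqrt (by positivity)]
  simp [sq_abs]

lemma integrable_dirac_sm' {α : Type*} [MeasurableSpace α] [MeasurableSingletonClass α]
    {E : Type*} [NormedAddCommGroup E] {f : α → E} (hf : StronglyMeasurable f) (x : α) :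
    Integrable f (Measure.dirac x) := by
  refine ⟨hf.aestronglyMeasurable, ?_⟩
  rw [HasFiniteIntegral, lintegral_dirac]
  exact ENNReal.coe_lt_top

lemma integral_comb' {α : Type*} [MeasurableSpace α] [MeasurableSingletonClass α]
    {G : Type*} [NormedAddCommGroup G] [NormedSpace ℝ G] [CompleteSpace G]
    {ι : Type*} (s : Finset ι) (p q : ι → ℝ) (hp : ∀ i, 0 ≤ p i)
    (hq0 : ∀ i, 0 ≤ q i) (hq1 : ∀ i, q i ≤ 1)
    (y1 y2 : ι → α) (r : ℝ) (hr : 0 ≤ r) (z : α) (f : α → G) (hf : StronglyMeasurable f) :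
    ∫ a, f a ∂((∑ i ∈ s, ENNReal.ofReal (p i) •
        (ENNReal.ofReal (q i) • Measure.dirac (y1 i)
          + ENNReal.ofReal (1 - q i) • Measure.dirac (y2 i)))
        + ENNReal.ofReal r • Measure.dirac z)
      = (∑ i ∈ s, p i • (q i • f (y1 i) + (1 - q i) • f (y2 i))) + r • f z := by
  have hd : ∀ x : α, Integrable f (Measure.dirac x) := integrable_dirac_sm' hf
  have hpair : ∀ i : ι, Integrable f
      (ENNReal.ofReal (q i) • Measure.dirac (y1 i)
        + ENNReal.ofReal (1 - q i) • Measure.dirac (y2 i)) := fun i =>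
    ((hd (y1 i)).smul_measure ENNReal.ofReal_ne_top).add_measure
      ((hd (y2 i)).smul_measure ENNReal.ofReal_ne_top)
  have hterm : ∀ i : ι, Integrable f (ENNReal.ofReal (p i) •
      (ENNReal.ofReal (q i) • Measure.dirac (y1 i)
        + ENNReal.ofReal (1 - q i) • Measure.dirac (y2 i))) := fun i =>
    (hpair i).smul_measure ENNReal.ofReal_ne_top
  rw [integral_add_measure (integrable_finset_sum_measure.2 fun i _ => hterm i)
      ((hd z).smul_measure ENNReal.ofReal_ne_top),
    integral_finset_sum_measure (fun i _ => hterm i)]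
  congr 1
  · refine Finset.sum_congr rfl fun i _ => ?_
    rw [integral_smul_measure, integral_add_measure
        ((hd (y1 i)).smul_measure ENNReal.ofReal_ne_top)
        ((hd (y2 i)).smul_measure ENNReal.ofReal_ne_top),
      integral_smul_measure, integral_smul_measure, integral_dirac' _ _ hf,
      integral_dirac' _ _ hf, ENNReal.toReal_ofReal (hp i), ENNReal.toReal_ofReal (hq0 i),
      ENNReal.toReal_ofReal (by linarith [hq1 i])]
  · rw [integral_smul_measure, integral_dirac' _ _ hf, ENNReal.toReal_ofReal hr]

set_option maxHeartbeats 1000000 in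
lemma bwd (v : EuclideanSpace ℝ (Fin d)) (Q : Matrix (Fin d) (Fin d) ℝ)
    (h1 : Q.PosSemidef) (h2 : (Q - Matrix.vecMulVec v v).PosSemidef) (h3 : Q.trace ≤ 1) :
    ∃ μ : Measure (EuclideanSpace ℝ (Fin d)), IsProbabilityMeasure μ ∧
      μ {y : EuclideanSpace ℝ (Fin d) | ‖y‖ ≤ 1}ᶜ = 0 ∧
      v = (∫ y, y ∂μ) ∧
      Q = Matrix.of fun i j => ∫ y, y i * y j ∂μ := by
  classical
  obtain ⟨A, hA⟩ : ∃ A : Matrix (Fin d) (Fin d) ℝ, Q - Matrix.vecMulVec v v = Aᴴ * A := by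
    open scoped MatrixOrder in
    obtain ⟨B, hB⟩ := CStarAlgebra.nonneg_iff_eq_star_mul_self.mp h2.nonneg
    exact ⟨B, hB⟩
  have hQjk : ∀ j k, Q j k = v j * v k + ∑ i, A i j * A i k := by
    intro j k
    have := congrArg (fun M : Matrix (Fin d) (Fin d) ℝ => M j k) hA
    simp only [Matrix.sub_apply, Matrix.vecMulVec_apply, Matrix.mul_apply,
      Matrix.conjTranspose_apply, star_trivial] at this
    linarith [this]
  obtain ⟨n, hn⟩ : ∃ n : Fin d → ℝ, ∀ i, n i = ∑ j, (A i j)^2 := ⟨_, fun _ => rfl⟩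
  have hn0 : ∀ i, 0 ≤ n i := fun i => (hn i) ▸ Finset.sum_nonneg fun j _ => sq_nonneg _
  have hsumn : ∑ i, n i = Q.trace - ‖v‖^2 := by
    rw [← sum_sq_eq_normsq' v, Matrix.trace]
    rw [Finset.sum_congr rfl fun i _ => hn i, Finset.sum_comm, ← Finset.sum_sub_distrib]
    refine Finset.sum_congr rfl fun j _ => ?_
    have h1 := hQjk j j
    have h2 : ∑ i, (A i j)^2 = ∑ i, A i j * A i j :=
      Finset.sum_congr rfl fun i _ => sq (A i j)
    simp only [Matrix.diag_apply]
    rw [h2, h1]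
    ring
  have hvnorm_le : ‖v‖^2 ≤ Q.trace := by
    have := Finset.sum_nonneg (fun i (_ : i ∈ Finset.univ) => hn0 i)
    rw [hsumn] at this; linarith
  have hSmeas : MeasurableSet {y : EuclideanSpace ℝ (Fin d) | ‖y‖ ≤ 1} :=
    (isClosed_le continuous_norm continuous_const).measurableSet
  have hAz0 : ∀ i, n i = 0 → ∀ j, A i j = 0 := by
    intro i hni j
    rw [hn i] at hni
    have := (Finset.sum_eq_zero_iff_of_nonneg (fun j _ => sq_nonneg (A i j))).mp hni j
      (Finset.mem_univ j)
    exact pow_eq_zero_iff (n := 2) (by norm_num) |>.mp this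
  rcases lt_or_ge (‖v‖^2) 1 with hv1 | hv1
  · -- main case : ‖v‖² < 1
    obtain ⟨c, hc⟩ : ∃ c : ℝ, c = 1 - ‖v‖^2 := ⟨_, rfl⟩
    have hcpos : 0 < c := by rw [hc]; linarith
    obtain ⟨u, hu⟩ : ∃ u : Fin d → EuclideanSpace ℝ (Fin d),
        ∀ i j, u i j = (Real.sqrt (n i))⁻¹ * A i j :=
      ⟨fun i => WithLp.toLp 2 ((Real.sqrt (n i))⁻¹ • (fun j => A i j : Fin d → ℝ)), fun i j => rfl⟩
    obtain ⟨b, hb⟩ : ∃ b : Fin d → ℝ, ∀ i, b i = (inner ℝ v (u i) : ℝ) := ⟨_, fun _ => rfl⟩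
    obtain ⟨D, hD⟩ : ∃ D : Fin d → ℝ, ∀ i, D i = Real.sqrt ((b i)^2 + c) := ⟨_, fun _ => rfl⟩
    have hDpos : ∀ i, 0 < D i := fun i => (hD i) ▸ Real.sqrt_pos.mpr (by positivity)
    have hDsq : ∀ i, (D i)^2 = (b i)^2 + c := fun i => (hD i) ▸ Real.sq_sqrt (by positivity)
    obtain ⟨t, ht⟩ : ∃ t : Fin d → ℝ, ∀ i, t i = D i - b i := ⟨_, fun _ => rfl⟩
    obtain ⟨s, hs⟩ : ∃ s : Fin d → ℝ, ∀ i, s i = D i + b i := ⟨_, fun _ => rfl⟩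
    have habsb : ∀ i, |b i| ≤ D i := by
      intro i
      have h := hDsq i
      have := (hDpos i).le
      rw [abs_le]; constructor <;> nlinarith
    have hts : ∀ i, 0 ≤ t i := fun i => by
      have := abs_le.mp (habsb i); rw [ht i]; linarith [this.2]
    have hss : ∀ i, 0 ≤ s i := fun i => by
      have := abs_le.mp (habsb i); rw [hs i]; linarith [this.1]
    obtain ⟨q, hq⟩ : ∃ q : Fin d → ℝ, ∀ i, q i = s i / (2 * D i) := ⟨_, fun _ => rfl⟩
    have hq0 : ∀ i, 0 ≤ q i := fun i =>
      (hq i) ▸ div_nonneg (hss i) (by linarith [hDpos i])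
    have hq1 : ∀ i, q i ≤ 1 := by
      intro i
      rw [hq i, div_le_one (by linarith [hDpos i])]
      have := abs_le.mp (habsb i)
      rw [hs i]; linarith [this.2]
    obtain ⟨p, hp⟩ : ∃ p : Fin d → ℝ, ∀ i, p i = n i / c := ⟨_, fun _ => rfl⟩
    have hp0 : ∀ i, 0 ≤ p i := fun i => (hp i) ▸ div_nonneg (hn0 i) hcpos.le
    have hsump : ∑ i, p i ≤ 1 := by
      rw [Finset.sum_congr rfl fun i _ => hp i, ← Finset.sum_div, div_le_one hcpos,
        hsumn, hc]
      linarith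
    have hsump0 : 0 ≤ ∑ i, p i := Finset.sum_nonneg fun i _ => hp0 i
    obtain ⟨y1, hy1⟩ : ∃ y1 : Fin d → EuclideanSpace ℝ (Fin d),
        ∀ i, y1 i = v + t i • u i := ⟨_, fun _ => rfl⟩
    obtain ⟨y2, hy2⟩ : ∃ y2 : Fin d → EuclideanSpace ℝ (Fin d),
        ∀ i, y2 i = v - s i • u i := ⟨_, fun _ => rfl⟩
    have hy1app : ∀ i j, y1 i j = v j + t i * u i j := by
      intro i j; rw [hy1 i]; rfl
    have hy2app : ∀ i j, y2 i j = v j - s i * u i j := by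
      intro i j; rw [hy2 i]; rfl
    have huz : ∀ i, n i = 0 → u i = 0 := by
      intro i hni
      ext j
      rw [hu i j, hAz0 i hni j]
      simp
    have hunorm : ∀ i, n i ≠ 0 → ‖u i‖ = 1 := by
      intro i hni
      have hnpos : 0 < n i := lt_of_le_of_ne (hn0 i) (Ne.symm hni)
      have hsq : ‖u i‖^2 = 1 := by
        rw [← sum_sq_eq_normsq']
        have heach : ∀ j, (u i j)^2 = (n i)⁻¹ * (A i j)^2 := by
          intro j
          rw [hu i j, mul_pow, ← Real.sqrt_inv, Real.sq_sqrt (by positivity)]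
        rw [Finset.sum_congr rfl fun j _ => heach j, ← Finset.mul_sum, ← hn i]
        field_simp
      nlinarith [norm_nonneg (u i)]
    have hy1norm : ∀ i, ‖y1 i‖ ≤ 1 := by
      intro i
      by_cases hni : n i = 0
      · rw [hy1 i, huz i hni, smul_zero, add_zero]
        nlinarith [norm_nonneg v]
      · have hnsq : ‖y1 i‖^2 = 1 := by
          rw [hy1 i, norm_add_sq_real, real_inner_smul_right, norm_smul, Real.norm_eq_abs,
            mul_pow, sq_abs, hunorm i hni, ← hb i]
          have hcoef : 2 * (t i * b i) + (t i)^2 = c := by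
            have hd := hDsq i
            rw [ht i]
            nlinarith [hd]
          nlinarith [hcoef, hc]
        nlinarith [norm_nonneg (y1 i)]
    have hy2norm : ∀ i, ‖y2 i‖ ≤ 1 := by
      intro i
      by_cases hni : n i = 0
      · rw [hy2 i, huz i hni, smul_zero, sub_zero]
        nlinarith [norm_nonneg v]
      · have hnsq : ‖y2 i‖^2 = 1 := by
          rw [hy2 i, norm_sub_sq_real, real_inner_smul_right, norm_smul, Real.norm_eq_abs,
            mul_pow, sq_abs, hunorm i hni, ← hb i]
          have hcoef : (s i)^2 - 2 * (s i * b i) = c := by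
            have hd := hDsq i
            rw [hs i]
            nlinarith [hd]
          nlinarith [hcoef, hc]
        nlinarith [norm_nonneg (y2 i)]
    have hvball : ‖v‖ ≤ 1 := by nlinarith [norm_nonneg v]
    -- common scalar identities
    have hqts : ∀ i, q i * t i - (1 - q i) * s i = 0 := by
      intro i
      have hDne : D i ≠ 0 := (hDpos i).ne'
      rw [hq i, ht i, hs i]
      field_simp
      ring
    have hq2 : ∀ i, q i * (t i)^2 + (1 - q i) * (s i)^2 = c := by
      intro i
      have hDne : D i ≠ 0 := (hDpos i).ne'
      have hd := hDsq i
      rw [hq i, ht i, hs i]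
      field_simp
      nlinarith [hd, hDpos i]
    refine ⟨(∑ i, ENNReal.ofReal (p i) •
        (ENNReal.ofReal (q i) • Measure.dirac (y1 i)
          + ENNReal.ofReal (1 - q i) • Measure.dirac (y2 i)))
        + ENNReal.ofReal (1 - ∑ i, p i) • Measure.dirac v, ?_, ?_, ?_, ?_⟩
    · -- probability measure
      constructor
      simp only [Measure.add_apply, Measure.smul_apply, Measure.finset_sum_apply,
        Measure.dirac_apply_of_mem (Set.mem_univ _), smul_eq_mul, mul_one]
      have hpair : ∀ i : Fin d, ENNReal.ofReal (q i) + ENNReal.ofReal (1 - q i) = 1 := by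
        intro i
        rw [← ENNReal.ofReal_add (hq0 i) (by linarith [hq1 i])]
        norm_num
      calc (∑ i, ENNReal.ofReal (p i) * (ENNReal.ofReal (q i) + ENNReal.ofReal (1 - q i)))
            + ENNReal.ofReal (1 - ∑ i, p i)
          = (∑ i, ENNReal.ofReal (p i)) + ENNReal.ofReal (1 - ∑ i, p i) := by
            congr 1
            refine Finset.sum_congr rfl fun i _ => ?_
            rw [hpair i, mul_one]
        _ = 1 := by
            rw [← ENNReal.ofReal_sum_of_nonneg (fun i _ => hp0 i),
              ← ENNReal.ofReal_add hsump0 (by linarith)]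
            norm_num
    · -- supported on the ball
      have hz : ∀ x : EuclideanSpace ℝ (Fin d), ‖x‖ ≤ 1 →
          Measure.dirac x {y : EuclideanSpace ℝ (Fin d) | ‖y‖ ≤ 1}ᶜ = 0 := by
        intro x hx
        rw [Measure.dirac_apply' _ hSmeas.compl]
        simp [hx]
      have hzero : ∀ i ∈ Finset.univ, (ENNReal.ofReal (p i) •
          (ENNReal.ofReal (q i) • Measure.dirac (y1 i)
            + ENNReal.ofReal (1 - q i) • Measure.dirac (y2 i)))
            {y : EuclideanSpace ℝ (Fin d) | ‖y‖ ≤ 1}ᶜ = 0 := by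
        intro i _
        simp [Measure.add_apply, Measure.smul_apply, hz _ (hy1norm i), hz _ (hy2norm i)]
      rw [Measure.add_apply, Measure.finset_sum_apply, Finset.sum_eq_zero hzero,
        Measure.smul_apply, hz v hvball, smul_zero, add_zero]
    · -- first moment
      rw [integral_comb' Finset.univ p q hp0 hq0 hq1 y1 y2 (1 - ∑ i, p i)
        (by linarith) v (fun y => y) stronglyMeasurable_id]
      have hpt : ∀ i : Fin d, q i • y1 i + (1 - q i) • y2 i = v := by
        intro i
        rw [hy1 i, hy2 i]
        have expand : q i • (v + t i • u i) + (1 - q i) • (v - s i • u i)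
            = (q i + (1 - q i)) • v + (q i * t i - (1 - q i) * s i) • u i := by
          module
        rw [expand, hqts i]
        norm_num
      rw [Finset.sum_congr rfl fun i _ => by rw [hpt i]]
      rw [← Finset.sum_smul]
      rw [← add_smul]
      norm_num
    · -- second moment
      ext j k
      have hsm : StronglyMeasurable (fun y : EuclideanSpace ℝ (Fin d) => y j * y k) :=
        (((EuclideanSpace.proj (𝕜 := ℝ) j).continuous).mul
          ((EuclideanSpace.proj (𝕜 := ℝ) k).continuous)).stronglyMeasurable
      rw [Matrix.of_apply, integral_comb' Finset.univ p q hp0 hq0 hq1 y1 y2 (1 - ∑ i, p i)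
        (by linarith) v (fun y => y j * y k) hsm]
      have hterm : ∀ i : Fin d,
          p i • (q i • (y1 i j * y1 i k) + (1 - q i) • (y2 i j * y2 i k))
            = p i * (v j * v k) + A i j * A i k := by
        intro i
        rw [smul_eq_mul, smul_eq_mul, smul_eq_mul, hy1app i j, hy1app i k,
          hy2app i j, hy2app i k]
        have hmid : q i * ((v j + t i * u i j) * (v k + t i * u i k))
            + (1 - q i) * ((v j - s i * u i j) * (v k - s i * u i k))
            = v j * v k + c * (u i j * u i k) := by
          linear_combination (v j * u i k + u i j * v k) * hqts i + (u i j * u i k) * hq2 i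
        rw [hmid]
        have hlast : p i * (c * (u i j * u i k)) = A i j * A i k := by
          by_cases hni : n i = 0
          · rw [hp i, hAz0 i hni j, hAz0 i hni k, hni]
            simp
          · rw [hp i, hu i j, hu i k]
            have hsq : Real.sqrt (n i) * Real.sqrt (n i) = n i :=
              Real.mul_self_sqrt (hn0 i)
            have hnpos : 0 < n i := lt_of_le_of_ne (hn0 i) (Ne.symm hni)
            have hsqrtne : Real.sqrt (n i) ≠ 0 := by positivity
            field_simp
            rw [Real.sq_sqrt (hn0 i)]
        rw [mul_add, hlast]
      rw [Finset.sum_congr rfl fun i _ => hterm i, Finset.sum_add_distrib]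
      rw [hQjk j k, smul_eq_mul, ← Finset.sum_mul]
      ring
  · -- boundary case : ‖v‖² ≥ 1, so Q = vvᵀ and μ = δ_v
    have hveq : ‖v‖^2 = 1 := le_antisymm (by linarith) hv1
    have hnz : ∀ i, n i = 0 := by
      intro i
      have hsum0 : ∑ i, n i ≤ 0 := by rw [hsumn]; linarith
      have hge := Finset.sum_nonneg (fun i (_ : i ∈ Finset.univ) => hn0 i)
      have heq : ∑ i, n i = 0 := le_antisymm hsum0 hge
      exact (Finset.sum_eq_zero_iff_of_nonneg (fun i _ => hn0 i)).mp heq i (Finset.mem_univ i)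
    have hQv : ∀ j k, Q j k = v j * v k := by
      intro j k
      rw [hQjk j k]
      have : ∑ i, A i j * A i k = 0 :=
        Finset.sum_eq_zero fun i _ => by rw [hAz0 i (hnz i) j, zero_mul]
      rw [this, add_zero]
    refine ⟨Measure.dirac v, by infer_instance, ?_, ?_, ?_⟩
    · rw [Measure.dirac_apply' _ hSmeas.compl]
      have : ‖v‖ ≤ 1 := by nlinarith [norm_nonneg v]
      simp [this]
    · rw [integral_dirac]
    · ext j k
      rw [Matrix.of_apply, integral_dirac' _ _ (by
        exact (((EuclideanSpace.proj (𝕜 := ℝ) j).continuous).mul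
          ((EuclideanSpace.proj (𝕜 := ℝ) k).continuous)).stronglyMeasurable)]
      exact hQv j k

/-- Equation (S), S-Lemma characterization of the moment set of
the unit ball: the set of pairs of first and second moments of Borel
probability measures on the closed unit ball of `ℝ^d` equals
`{(v,Q) : Q ⪰ 0, Q − vvᵀ ⪰ 0, Tr Q ≤ 1}`. -/
theorem stmt_12 {d : ℕ} (hd : 1 ≤ d) :
    {p : EuclideanSpace ℝ (Fin d) × Matrix (Fin d) (Fin d) ℝ |
      ∃ μ : Measure (EuclideanSpace ℝ (Fin d)), IsProbabilityMeasure μ ∧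
        μ {y : EuclideanSpace ℝ (Fin d) | ‖y‖ ≤ 1}ᶜ = 0 ∧
        p.1 = (∫ y, y ∂μ) ∧
        p.2 = Matrix.of fun i j => ∫ y, y i * y j ∂μ} =
    {p : EuclideanSpace ℝ (Fin d) × Matrix (Fin d) (Fin d) ℝ |
      p.2.PosSemidef ∧ (p.2 - Matrix.vecMulVec p.1 p.1).PosSemidef ∧
      p.2.trace ≤ 1} := by
  ext p
  constructor
  · rintro ⟨μ, hprob, h0, hv, hQ⟩
    exact fwd p.1 p.2 μ hprob h0 hv hQ
  · rintro ⟨h1, h2, h3⟩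
    exact bwd p.1 p.2 h1 h2 h3
end
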